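/- (Characterization of the stable reverse Farkas Lemma.) Let f ∈ Γ(X) and assume A ∩ dom f ≠ ∅. Then for each (x*, s) ∈ X*×ℝ the following are equivalent: (a) every x ∈ C with f_i(x) ≤ 0 for all i ∈ I satisfies f(x) − ⟨x*, x⟩ ≥ s; (b) (x*, −s) ∈ w*-cl(epi f* + K). -/

import Mathlib

open Pointwise
open Topology Filter

set_option linter.unusedSectionVars false
set_option maxHeartbeats 1000000

noncomputable section

variable {X : Type*} [AddCommGroup X] [Module ℝ X] [TopologicalSpace X]

/-- Fenchel conjugate, as a function on the weak-* dual. -/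
def conjFn (h : X → EReal) : WeakDual ℝ X → EReal :=
  fun p => ⨆ x : X, (p x : EReal) - h x

/-- Epigraph of an extended-real-valued function. -/
def epiFn {V : Type*} (h : V → EReal) : Set (V × ℝ) :=
  {q | h q.1 ≤ (q.2 : EReal)}

/-- Graph of an extended-real-valued function (where it is finite). -/
def gphFn {V : Type*} (h : V → EReal) : Set (V × ℝ) :=
  {q | h q.1 = (q.2 : EReal)}

/-- Effective domain. -/
def domFn {V : Type*} (h : V → EReal) : Set V :=
  {x | h x < ⊤}

open Classical in
/-- Indicator function of a set. -/
def indicatorE {V : Type*} (D : Set V) : V → EReal :=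
  fun x => if x ∈ D then (0 : EReal) else ⊤

/-- Convex cone generated by `D ∪ {0}`. -/
def coneGen {V : Type*} [AddCommGroup V] [Module ℝ V] (D : Set V) : Set V :=
  {0} ∪ {y | ∃ t : ℝ, 0 ≤ t ∧ ∃ x ∈ convexHull ℝ D, y = t • x}

/-- `h ∈ Γ(X)`: proper, convex and lower semicontinuous. -/
def InGamma (h : X → EReal) : Prop :=
  (∀ x, h x ≠ ⊥) ∧ (∃ x, h x ≠ ⊤) ∧
    Convex ℝ {q : X × ℝ | h q.1 ≤ (q.2 : EReal)} ∧ LowerSemicontinuous h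

/-- Solution set `A` of the system `σ = {f i x ≤ 0, i ∈ I; x ∈ C}`. -/
def solSet {I : Type*} (C : Set X) (f : I → X → EReal) : Set X :=
  {x | x ∈ C ∧ ∀ i, f i x ≤ (0 : EReal)}

/-- Characteristic cone `K = cone (epi δ_C* ∪ ⋃ i, epi f_i*)` of the system. -/
def charCone {I : Type*} (C : Set X) (f : I → X → EReal) : Set (WeakDual ℝ X × ℝ) :=
  coneGen (epiFn (conjFn (indicatorE C)) ∪ ⋃ i, epiFn (conjFn (f i)))

/-- Barrier cone `barr C = dom δ_C*`. -/
def barCone (C : Set X) : Set (WeakDual ℝ X) :=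
  domFn (conjFn (indicatorE C))

/-- The Farkas–Minkowski constraint qualification. -/
def IsFM {I : Type*} (C : Set X) (f : I → X → EReal) : Prop :=
  (solSet C f).Nonempty ∧ IsClosed (charCone C f)

/-- Recession function `h^∞ = δ*_{dom h*}`. -/
def recFn (h : X → EReal) : X → EReal :=
  fun x => ⨆ q ∈ domFn (conjFn h), ((q x : ℝ) : EReal)

/-- Recession cone `D^∞ = ⋂_{t>0} t (D - a)`, for any `a ∈ D`. -/
def recCone (D : Set X) : Set X :=
  {d | ∀ a ∈ D, ∀ t : ℝ, 0 < t → d ∈ t • (D - ({a} : Set X))}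

/-- Subdifferential of `h` at `a`. -/
def subdiff (h : X → EReal) (a : X) : Set (WeakDual ℝ X) :=
  {p | (∃ r : ℝ, h a = (r : EReal)) ∧ ∀ x, h a + ((p (x - a) : ℝ) : EReal) ≤ h x}

section ConeGen
variable {V : Type*} [AddCommGroup V] [Module ℝ V] {D : Set V} {y y1 y2 : V}

theorem zero_mem_coneGen : (0 : V) ∈ coneGen D := Or.inl rfl

theorem subset_coneGen : D ⊆ coneGen D := fun y hy =>
  Or.inr ⟨1, zero_le_one, y, subset_convexHull ℝ D hy, (one_smul _ _).symm⟩

theorem smul_mem_coneGen {t : ℝ} (ht : 0 ≤ t) (hy : y ∈ coneGen D) : t • y ∈ coneGen D := by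
  rcases hy with hy | ⟨s, hs, x, hx, rfl⟩
  · left; simp only [Set.mem_singleton_iff] at hy ⊢; simp [hy]
  · right; exact ⟨t * s, mul_nonneg ht hs, x, hx, (mul_smul t s x).symm⟩

theorem convex_coneGen : Convex ℝ (coneGen D) := by
  intro z1 h1 z2 h2 a b ha hb hab
  rcases h1 with h1 | ⟨t1, ht1, x1, hx1, rfl⟩
  · simp only [Set.mem_singleton_iff] at h1; subst h1
    simpa using smul_mem_coneGen hb h2
  rcases h2 with h2 | ⟨t2, ht2, x2, hx2, rfl⟩
  · simp only [Set.mem_singleton_iff] at h2; subst h2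
    simpa using smul_mem_coneGen ha (Or.inr ⟨t1, ht1, x1, hx1, rfl⟩)
  set T := a * t1 + b * t2 with hT
  have hT0 : 0 ≤ T := by positivity
  rcases eq_or_lt_of_le hT0 with hT0' | hT0'
  · have h1 : a * t1 = 0 := by nlinarith [mul_nonneg ha ht1, mul_nonneg hb ht2]
    have h2 : b * t2 = 0 := by nlinarith [mul_nonneg ha ht1, mul_nonneg hb ht2]
    left
    simp only [Set.mem_singleton_iff]
    rw [smul_smul, smul_smul, h1, h2]
    simp
  · right
    refine ⟨T, hT0, (a * t1 / T) • x1 + (b * t2 / T) • x2, ?_, ?_⟩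
    · exact (convex_convexHull ℝ D) hx1 hx2 (by positivity) (by positivity)
        (by field_simp; exact hT.symm)
    · rw [smul_add, smul_smul, smul_smul, smul_smul, smul_smul]
      rw [mul_div_cancel₀ _ (ne_of_gt hT0'), mul_div_cancel₀ _ (ne_of_gt hT0')]

theorem add_mem_coneGen (h1 : y1 ∈ coneGen D) (h2 : y2 ∈ coneGen D) :
    y1 + y2 ∈ coneGen D := by
  have h := convex_coneGen h1 h2 (by norm_num : (0:ℝ) ≤ 1/2) (by norm_num : (0:ℝ) ≤ 1/2)
    (by norm_num)
  have := smul_mem_coneGen (t := 2) (by norm_num) h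
  rwa [smul_add, smul_smul, smul_smul, show (2:ℝ) * (1/2) = 1 by norm_num, one_smul,
    one_smul] at this

end ConeGen

theorem mem_epi_conj_iff {h : X → EReal} {z : WeakDual ℝ X × ℝ} :
    z ∈ epiFn (conjFn h) ↔ ∀ x, (z.1 x : EReal) - h x ≤ (z.2 : EReal) := by
  change (⨆ x : X, ((z.1 x : EReal) - h x)) ≤ (z.2 : EReal) ↔ _
  exact iSup_le_iff

theorem convex_halfplane (x : X) (c : ℝ) :
    Convex ℝ {z : WeakDual ℝ X × ℝ | z.1 x - z.2 ≤ c} := by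
  intro z1 h1 z2 h2 a b ha hb hab
  simp only [Set.mem_setOf_eq] at h1 h2 ⊢
  have e1 : (a • z1 + b • z2).1 x = a * z1.1 x + b * z2.1 x := rfl
  have e2 : (a • z1 + b • z2).2 = a * z1.2 + b * z2.2 := rfl
  rw [e1, e2]
  have h1' := mul_le_mul_of_nonneg_left h1 ha
  have h2' := mul_le_mul_of_nonneg_left h2 hb
  have e3 : a * c + b * c = c := by rw [← add_mul, hab, one_mul]
  nlinarith [h1', h2', e3]

theorem convex_epi_conj (h : X → EReal) : Convex ℝ (epiFn (conjFn h)) := by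
  have heq : epiFn (conjFn h) =
      ⋂ x : X, {z : WeakDual ℝ X × ℝ | (z.1 x : EReal) - h x ≤ (z.2 : EReal)} := by
    ext z; simp only [Set.mem_iInter, Set.mem_setOf_eq]; exact mem_epi_conj_iff
  rw [heq]
  apply convex_iInter
  intro x
  set v := h x with hv
  clear_value v
  induction v using EReal.rec with
  | bot =>
    have : {z : WeakDual ℝ X × ℝ | (z.1 x : EReal) - (⊥ : EReal) ≤ (z.2 : EReal)} = ∅ := by
      ext z
      simp only [Set.mem_setOf_eq, Set.mem_empty_iff_false, iff_false, not_le,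
        EReal.coe_sub_bot]
      exact EReal.coe_lt_top z.2
    rw [this]; exact convex_empty
  | coe c =>
    have : {z : WeakDual ℝ X × ℝ | (z.1 x : EReal) - ((c : ℝ) : EReal) ≤ (z.2 : EReal)} =
        {z : WeakDual ℝ X × ℝ | z.1 x - z.2 ≤ c} := by
      ext z
      rw [Set.mem_setOf_eq, Set.mem_setOf_eq, ← EReal.coe_sub, EReal.coe_le_coe_iff]
      constructor <;> intro hz <;> linarith
    rw [this]; exact convex_halfplane x c
  | top =>
    have : {z : WeakDual ℝ X × ℝ | (z.1 x : EReal) - (⊤ : EReal) ≤ (z.2 : EReal)} = Set.univ := by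
      ext z; simp [EReal.sub_top]
    rw [this]; exact convex_univ

theorem isClosed_epiFn {h : X → EReal} (hl : LowerSemicontinuous h) : IsClosed (epiFn h) := by
  have H : IsClosed {p : X × EReal | h p.1 ≤ p.2} := hl.isClosed_epigraph
  have heq : epiFn h =
      (fun q : X × ℝ => (q.1, (q.2 : EReal))) ⁻¹' {p : X × EReal | h p.1 ≤ p.2} := rfl
  rw [heq]
  exact H.preimage (continuous_fst.prodMk (continuous_coe_real_ereal.comp continuous_snd))

private theorem slope_nonpos {v u μ : ℝ} (H : ∀ t : ℝ, 0 ≤ t → v + t * μ ≤ u) : μ ≤ 0 := by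
  by_contra hμ
  push_neg at hμ
  have h0 := H 0 le_rfl
  have h1 : (0:ℝ) ≤ (u - v + 1) / μ := by
    apply div_nonneg _ hμ.le
    linarith
  have h2 := H ((u - v + 1) / μ) h1
  rw [div_mul_cancel₀ _ (ne_of_gt hμ)] at h2
  linarith

theorem prod_functional {E : Type*} [AddCommGroup E] [Module ℝ E] [TopologicalSpace E]
    (F : (E × ℝ) →L[ℝ] ℝ) (z : E × ℝ) :
    F z = F (z.1, 0) + z.2 * F (0, 1) := by
  have hz : z = (z.1, (0:ℝ)) + z.2 • ((0:E), (1:ℝ)) := by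
    ext
    · simp
    · simp
  rw [hz, map_add, map_smul]
  simp [smul_eq_mul]

/-- Every continuous linear functional on the weak-* dual is evaluation at a point. -/
theorem weakdual_dual (φ : WeakDual ℝ X →L[ℝ] ℝ) :
    ∃ x : X, ∀ q : WeakDual ℝ X, φ q = q x := by
  have hnb : φ ⁻¹' Set.Ioo (-1:ℝ) 1 ∈ 𝓝 (0 : WeakDual ℝ X) := by
    apply φ.continuous.continuousAt.preimage_mem_nhds
    rw [map_zero]
    exact Ioo_mem_nhds (by norm_num) (by norm_num)
  obtain ⟨V, hV, hVsub⟩ :=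
    (mem_nhds_induced (fun (q : WeakDual ℝ X) (x : X) => (topDualPairing ℝ X) q x) 0 _).mp hnb
  rw [nhds_pi] at hV
  obtain ⟨J, hJfin, V', hV', hsub⟩ := Filter.mem_pi.mp hV
  have key : ∀ q : WeakDual ℝ X, (∀ x ∈ J, q x = 0) → φ q = 0 := by
    intro q hq
    by_contra hφq
    have hmem : ∀ t : ℝ, t • q ∈ φ ⁻¹' Set.Ioo (-1:ℝ) 1 := by
      intro t
      apply hVsub
      apply hsub
      intro x hx
      show (topDualPairing ℝ X) (t • q) x ∈ V' x
      have h0 : ((topDualPairing ℝ X) (t • q)) x = 0 := by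
        show t * q x = 0
        rw [hq x hx, mul_zero]
      have h0V : (0:ℝ) ∈ V' x := mem_of_mem_nhds (hV' x)
      rw [h0]
      exact h0V
    have := hmem (2 / φ q)
    simp only [Set.mem_preimage, map_smul, smul_eq_mul, Set.mem_Ioo] at this
    rw [div_mul_cancel₀ _ hφq] at this
    linarith [this.2]
  have : Finite J := hJfin.to_subtype
  set L : J → (WeakDual ℝ X →ₗ[ℝ] ℝ) := fun j => (topDualPairing ℝ X).flip (j : X) with hL
  have hker : ⨅ j, LinearMap.ker (L j) ≤ LinearMap.ker (φ : WeakDual ℝ X →ₗ[ℝ] ℝ) := by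
    intro q hq
    rw [Submodule.mem_iInf] at hq
    refine LinearMap.mem_ker.mpr (key q fun x hx => ?_)
    exact LinearMap.mem_ker.mp (hq ⟨x, hx⟩)
  have hspan := mem_span_of_iInf_ker_le_ker hker
  have := Fintype.ofFinite J
  obtain ⟨c, hc⟩ := (Finsupp.mem_span_range_iff_exists_finsupp).mp hspan
  refine ⟨c.sum fun j t => t • (j : X), fun q => ?_⟩
  have h1 : φ q = (c.sum fun i a => a • L i) q := by rw [hc]; rfl
  rw [h1, Finsupp.sum, Finsupp.sum, LinearMap.sum_apply, map_sum]
  apply Finset.sum_congr rfl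
  intro j _
  rw [LinearMap.smul_apply, map_smul]
  rfl

theorem charCone_bound {I : Type*} {C : Set X} {f : I → X → EReal}
    (hf : ∀ i x, f i x ≠ ⊥) {x : X} (hx : x ∈ C) (hfx : ∀ i, f i x ≤ (0 : EReal))
    {z : WeakDual ℝ X × ℝ} (hz : z ∈ charCone C f) : z.1 x ≤ z.2 := by
  set H := {z : WeakDual ℝ X × ℝ | z.1 x - z.2 ≤ 0} with hH
  have hHconv : Convex ℝ H := convex_halfplane x 0
  have hD : (epiFn (conjFn (indicatorE C)) ∪ ⋃ i, epiFn (conjFn (f i))) ⊆ H := by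
    rintro w (hw | hw)
    · have h1 := mem_epi_conj_iff.mp hw x
      rw [show indicatorE C x = (0 : EReal) from if_pos hx] at h1
      rw [show ((0:EReal)) = (((0:ℝ)):EReal) from rfl, ← EReal.coe_sub,
        EReal.coe_le_coe_iff] at h1
      simp only [hH, Set.mem_setOf_eq]
      linarith
    · obtain ⟨s, ⟨i, rfl⟩, hw⟩ := hw
      have h1 := mem_epi_conj_iff.mp hw x
      have hne : f i x ≠ ⊥ := hf i x
      have hnt : f i x ≠ ⊤ := fun ht => by
        have h0 := hfx i
        rw [ht] at h0
        exact absurd h0 (by simp)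
      obtain ⟨v, hv⟩ : ∃ v : ℝ, f i x = (v : EReal) := by
        set u := f i x with hu
        clear_value u
        induction u using EReal.rec with
        | bot => exact absurd rfl hne
        | coe a => exact ⟨a, rfl⟩
        | top => exact absurd rfl hnt
      have hv0 : v ≤ 0 := by
        have := hfx i
        rw [hv] at this
        exact_mod_cast this
      rw [hv, ← EReal.coe_sub, EReal.coe_le_coe_iff] at h1
      simp only [hH, Set.mem_setOf_eq]
      linarith
  have hch : convexHull ℝ (epiFn (conjFn (indicatorE C)) ∪ ⋃ i, epiFn (conjFn (f i))) ⊆ H :=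
    convexHull_min hD hHconv
  rcases hz with hz | ⟨t, ht, w, hw, rfl⟩
  · simp only [Set.mem_singleton_iff] at hz
    subst hz
    exact le_rfl
  · have hwH : w.1 x - w.2 ≤ 0 := hch hw
    have e1 : (t • w).1 x = t * w.1 x := rfl
    have e2 : (t • w).2 = t * w.2 := rfl
    rw [e1, e2]
    nlinarith

theorem sum_bound {I : Type*} {C : Set X} {f : I → X → EReal} {g : X → EReal}
    (hf : ∀ i x, f i x ≠ ⊥) {x : X} (hx : x ∈ C) (hfx : ∀ i, f i x ≤ (0 : EReal))
    {v : ℝ} (hgx : g x = (v : EReal))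
    {z : WeakDual ℝ X × ℝ} (hz : z ∈ epiFn (conjFn g) + charCone C f) :
    z.1 x - z.2 ≤ v := by
  obtain ⟨z1, hz1, z2, hz2, rfl⟩ := Set.mem_add.mp hz
  have h1 := mem_epi_conj_iff.mp hz1 x
  rw [hgx, ← EReal.coe_sub, EReal.coe_le_coe_iff] at h1
  have h2 := charCone_bound hf hx hfx hz2
  have e1 : (z1 + z2).1 x = z1.1 x + z2.1 x := rfl
  have e2 : (z1 + z2).2 = z1.2 + z2.2 := rfl
  rw [e1, e2]
  linarith

theorem ereal_real_cases {u : EReal} (hb : u ≠ ⊥) (ht : u ≠ ⊤) : ∃ v : ℝ, u = (v : EReal) := by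
  set w := u with hw
  clear_value w
  induction w using EReal.rec with
  | bot => exact absurd rfl hb
  | coe a => exact ⟨a, rfl⟩
  | top => exact absurd rfl ht

/-- Reinterpret a continuous linear functional as an element of the weak-* dual. -/
def toWD (φ : X →L[ℝ] ℝ) : WeakDual ℝ X := φ

section Separation
variable [IsTopologicalAddGroup X] [ContinuousSMul ℝ X] [LocallyConvexSpace ℝ X]

theorem conj_proper {h : X → EReal} (hb : ∀ x, h x ≠ ⊥)
    (hconv : Convex ℝ (epiFn h)) (hcl : IsClosed (epiFn h))
    {x₁ : X} (hx₁ : h x₁ ≠ ⊤) :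
    ∃ z : WeakDual ℝ X × ℝ, z ∈ epiFn (conjFn h) := by
  obtain ⟨c, hc⟩ := ereal_real_cases (hb x₁) hx₁
  have hnotin : (x₁, c - 1) ∉ epiFn h := by
    intro hmem
    have : h x₁ ≤ ((c - 1 : ℝ) : EReal) := hmem
    rw [hc, EReal.coe_le_coe_iff] at this
    linarith
  obtain ⟨F, u, hFlt, hFx⟩ := geometric_hahn_banach_closed_point hconv hcl hnotin
  set φ1 : X →L[ℝ] ℝ := F.comp (ContinuousLinearMap.inl ℝ X ℝ) with hφ1
  set μ : ℝ := F (0, 1) with hμdef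
  have hFz : ∀ z : X × ℝ, F z = φ1 z.1 + z.2 * μ := by
    intro z
    rw [prod_functional F z]
    rfl
  have hmem1 : (x₁, c) ∈ epiFn h := by
    show h x₁ ≤ ((c : ℝ) : EReal)
    rw [hc]
  have hμ : μ < 0 := by
    have h1 := hFlt _ hmem1
    have h2 := hFx
    rw [hFz] at h1 h2
    simp only at h1 h2
    nlinarith
  have hainv : 0 < (-μ)⁻¹ := inv_pos.mpr (by linarith)
  refine ⟨(toWD ((-μ)⁻¹ • φ1), (-μ)⁻¹ * u), ?_⟩
  rw [mem_epi_conj_iff]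
  intro x
  set w := h x with hwdef
  have hqx : (toWD ((-μ)⁻¹ • φ1)) x = (-μ)⁻¹ * φ1 x := rfl
  clear_value w
  induction w using EReal.rec with
  | bot => exact absurd hwdef.symm (hb x)
  | coe v =>
    have hmem : (x, v) ∈ epiFn h := by
      show h x ≤ ((v : ℝ) : EReal)
      rw [← hwdef]
    have h1 := hFlt _ hmem
    rw [hFz] at h1
    simp only at h1
    rw [hqx, ← EReal.coe_sub, EReal.coe_le_coe_iff]
    have h2 := mul_lt_mul_of_pos_left h1 hainv
    rw [mul_add] at h2
    have hμne : -μ ≠ 0 := ne_of_gt (by linarith)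
    have h3 : (-μ)⁻¹ * (v * μ) = -v := by field_simp [hμ.ne]
    rw [h3] at h2
    linarith
  | top =>
    rw [EReal.sub_top]
    exact bot_le

theorem fenchel_point {h : X → EReal} (hb : ∀ x, h x ≠ ⊥) (hd : ∃ x, h x ≠ ⊤)
    (hconv : Convex ℝ (epiFn h)) (hcl : IsClosed (epiFn h))
    {x₀ : X} {α : ℝ} (hα : ¬ h x₀ ≤ (α : EReal)) :
    ∃ z : WeakDual ℝ X × ℝ, z ∈ epiFn (conjFn h) ∧ (α : ℝ) < z.1 x₀ - z.2 := by
  obtain ⟨x₁, hx₁⟩ := hd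
  obtain ⟨c, hc⟩ := ereal_real_cases (hb x₁) hx₁
  have hnotin : (x₀, α) ∉ epiFn h := hα
  obtain ⟨F, u, hFlt, hFx⟩ := geometric_hahn_banach_closed_point hconv hcl hnotin
  set φ1 : X →L[ℝ] ℝ := F.comp (ContinuousLinearMap.inl ℝ X ℝ) with hφ1
  set μ : ℝ := F (0, 1) with hμdef
  have hFz : ∀ z : X × ℝ, F z = φ1 z.1 + z.2 * μ := by
    intro z
    rw [prod_functional F z]
    rfl
  have hmem1 : (x₁, c) ∈ epiFn h := by
    show h x₁ ≤ ((c : ℝ) : EReal)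
    rw [hc]
  have hup : ∀ t : ℝ, 0 ≤ t → (x₁, c + t) ∈ epiFn h := by
    intro t ht
    show h x₁ ≤ ((c + t : ℝ) : EReal)
    rw [hc, EReal.coe_le_coe_iff]
    linarith
  have hμ0 : μ ≤ 0 := by
    apply slope_nonpos (v := φ1 x₁ + c * μ) (u := u)
    intro t ht
    have h1 := hFlt _ (hup t ht)
    rw [hFz] at h1
    simp only at h1
    nlinarith [h1]
  have hFx' : u < φ1 x₀ + α * μ := by
    have := hFx
    rw [hFz] at this
    simpa using this
  rcases lt_or_eq_of_le hμ0 with hμ | hμ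
  · -- μ < 0
    have hainv : 0 < (-μ)⁻¹ := inv_pos.mpr (by linarith)
    refine ⟨(toWD ((-μ)⁻¹ • φ1), (-μ)⁻¹ * u), ?_, ?_⟩
    · rw [mem_epi_conj_iff]
      intro x
      set w := h x with hwdef
      have hqx : (toWD ((-μ)⁻¹ • φ1)) x = (-μ)⁻¹ * φ1 x := rfl
      clear_value w
      induction w using EReal.rec with
      | bot => exact absurd hwdef.symm (hb x)
      | coe v =>
        have hmem : (x, v) ∈ epiFn h := by
          show h x ≤ ((v : ℝ) : EReal)
          rw [← hwdef]
        have h1 := hFlt _ hmem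
        rw [hFz] at h1
        simp only at h1
        rw [hqx, ← EReal.coe_sub, EReal.coe_le_coe_iff]
        have h2 := mul_lt_mul_of_pos_left h1 hainv
        rw [mul_add] at h2
        have hμne : -μ ≠ 0 := ne_of_gt (by linarith)
        have h3 : (-μ)⁻¹ * (v * μ) = -v := by field_simp [hμ.ne]
        rw [h3] at h2
        linarith
      | top =>
        rw [EReal.sub_top]
        exact bot_le
    · have hqx : (toWD ((-μ)⁻¹ • φ1)) x₀ = (-μ)⁻¹ * φ1 x₀ := rfl
      simp only [hqx]
      have h2 := mul_lt_mul_of_pos_left hFx' hainv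
      rw [mul_add] at h2
      have hμne : -μ ≠ 0 := ne_of_gt (by linarith)
      have h3 : (-μ)⁻¹ * (α * μ) = -α := by field_simp [hμ.ne]
      rw [h3] at h2
      linarith
  · -- μ = 0
    have hμ' : μ = 0 := hμ
    have hψ : ∀ x : X, h x ≠ ⊤ → φ1 x < u := by
      intro x hx
      obtain ⟨v, hv⟩ := ereal_real_cases (hb x) hx
      have hmem : (x, v) ∈ epiFn h := by
        show h x ≤ ((v : ℝ) : EReal)
        rw [hv]
      have h1 := hFlt _ hmem
      rw [hFz] at h1
      simp only [hμ'] at h1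
      linarith
    have hx₀u : u < φ1 x₀ := by
      rw [hμ'] at hFx'
      linarith
    obtain ⟨z₁, hz₁⟩ := conj_proper hb hconv hcl hx₁
    set lam : ℝ := max 0 ((α - (z₁.1 x₀ - z₁.2) + 1) / (φ1 x₀ - u)) with hlam
    have hlam0 : 0 ≤ lam := le_max_left _ _
    have hlam1 : α - (z₁.1 x₀ - z₁.2) + 1 ≤ lam * (φ1 x₀ - u) := by
      have hpos : 0 < φ1 x₀ - u := by linarith
      have := le_max_right 0 ((α - (z₁.1 x₀ - z₁.2) + 1) / (φ1 x₀ - u))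
      calc α - (z₁.1 x₀ - z₁.2) + 1
          = ((α - (z₁.1 x₀ - z₁.2) + 1) / (φ1 x₀ - u)) * (φ1 x₀ - u) := by
            field_simp
        _ ≤ lam * (φ1 x₀ - u) := by
            apply mul_le_mul_of_nonneg_right this hpos.le
    refine ⟨(z₁.1 + toWD (lam • φ1), z₁.2 + lam * u), ?_, ?_⟩
    · rw [mem_epi_conj_iff]
      intro x
      have hqx : (z₁.1 + toWD (lam • φ1)) x = z₁.1 x + lam * φ1 x := rfl
      set w := h x with hwdef
      clear_value w
      induction w using EReal.rec with
      | bot => exact absurd hwdef.symm (hb x)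
      | coe v =>
        have h1 := mem_epi_conj_iff.mp hz₁ x
        rw [← hwdef, ← EReal.coe_sub, EReal.coe_le_coe_iff] at h1
        have h2 : φ1 x < u := by
          apply hψ
          rw [← hwdef]
          exact fun hcon => by simp at hcon
        rw [hqx]
        simp only
        rw [← EReal.coe_sub, EReal.coe_le_coe_iff]
        nlinarith [mul_le_mul_of_nonneg_left h2.le hlam0]
      | top =>
        rw [EReal.sub_top]
        exact bot_le
    · have hqx : (z₁.1 + toWD (lam • φ1)) x₀ = z₁.1 x₀ + lam * φ1 x₀ := rfl
      simp only [hqx]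
      nlinarith

end Separation

/-- Theorem 1 (Characterization of the stable reverse Farkas Lemma). -/
theorem stmt4 [IsTopologicalAddGroup X] [ContinuousSMul ℝ X] [LocallyConvexSpace ℝ X] [T2Space X] {I : Type*} (C : Set X) (hCne : C.Nonempty) (hCcl : IsClosed C) (hCcv : Convex ℝ C)
    (f : I → X → EReal) (hf : ∀ i, InGamma (f i))
    (g : X → EReal) (hg : InGamma g)
    (hA : (solSet C f ∩ domFn g).Nonempty)
    (p : WeakDual ℝ X) (s : ℝ) :
    (∀ x ∈ C, (∀ i, f i x ≤ (0 : EReal)) → (s : EReal) ≤ g x - ((p x : ℝ) : EReal)) ↔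
      (p, -s) ∈ closure (epiFn (conjFn g) + charCone C f) := by
  classical
  letI : LocallyConvexSpace ℝ (WeakDual ℝ X) :=
    (inferInstance : LocallyConvexSpace ℝ (WeakBilin (topDualPairing ℝ X)))
  obtain ⟨hgbot, hgdom, hgconv, hglsc⟩ := hg
  have hfbot : ∀ i x, f i x ≠ ⊥ := fun i x => (hf i).1 x
  set S := epiFn (conjFn g) + charCone C f with hSdef
  have h0K : (0 : WeakDual ℝ X × ℝ) ∈ charCone C f := zero_mem_coneGen
  have hEsub : ∀ e ∈ epiFn (conjFn g), e ∈ S := by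
    intro e he
    have := Set.add_mem_add he h0K
    rwa [add_zero] at this
  have hSK : ∀ z ∈ S, ∀ k ∈ charCone C f, z + k ∈ S := by
    rintro z hz k hk
    obtain ⟨e, he, k', hk', rfl⟩ := Set.mem_add.mp hz
    have : e + (k' + k) ∈ S := Set.add_mem_add he (add_mem_coneGen hk' hk)
    rwa [← add_assoc] at this
  constructor
  · -- (a) → (b)
    intro hyp
    by_contra hnot
    have hSconv : Convex ℝ S := (convex_epi_conj g).add convex_coneGen
    obtain ⟨zg, hzg⟩ := conj_proper hgbot hgconv (isClosed_epiFn hglsc) hgdom.choose_spec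
    have hSne : S.Nonempty := ⟨zg, hEsub zg hzg⟩
    obtain ⟨F, u, hFlt, hFx⟩ :=
      geometric_hahn_banach_closed_point hSconv.closure isClosed_closure hnot
    obtain ⟨x₀, hx₀⟩ := weakdual_dual (F.comp (ContinuousLinearMap.inl ℝ (WeakDual ℝ X) ℝ))
    set c : ℝ := F (0, 1) with hcdef
    have hFz : ∀ z : WeakDual ℝ X × ℝ, F z = z.1 x₀ + z.2 * c := by
      intro z
      rw [prod_functional F z]
      congr 1
      exact hx₀ z.1
    have hSlt : ∀ z ∈ S, z.1 x₀ + z.2 * c < u := by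
      intro z hz
      have := hFlt z (subset_closure hz)
      rwa [hFz] at this
    have hpoint : u < p x₀ + (-s) * c := by
      have := hFx
      rwa [hFz] at this
    obtain ⟨z₁, hz₁⟩ := hSne
    have h01 : ((0 : WeakDual ℝ X), (1 : ℝ)) ∈ epiFn (conjFn (indicatorE C)) := by
      rw [mem_epi_conj_iff]
      intro x
      by_cases hx : x ∈ C
      · rw [show indicatorE C x = ((0 : ℝ) : EReal) from if_pos hx]
        rw [show ((((0 : WeakDual ℝ X), (1 : ℝ)).1 x : ℝ) : EReal) = ((0 : ℝ) : EReal) from rfl]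
        rw [← EReal.coe_sub, EReal.coe_le_coe_iff]
        norm_num
      · rw [show indicatorE C x = (⊤ : EReal) from if_neg hx, EReal.sub_top]
        exact bot_le
    have h0t : ∀ t : ℝ, 0 ≤ t → ((0 : WeakDual ℝ X), t) ∈ charCone C f := by
      intro t ht
      have h1 : ((0 : WeakDual ℝ X), (1 : ℝ)) ∈ charCone C f :=
        subset_coneGen (Set.mem_union_left _ h01)
      have := smul_mem_coneGen ht h1
      have he : t • ((0 : WeakDual ℝ X), (1 : ℝ)) = ((0 : WeakDual ℝ X), t) := by
        rw [Prod.smul_mk, smul_zero, smul_eq_mul, mul_one]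
      rwa [he] at this
    have hKbd : ∀ k ∈ charCone C f, k.1 x₀ + k.2 * c ≤ 0 := by
      intro k hk
      have hstep : ∀ t : ℝ, 0 ≤ t → (z₁.1 x₀ + z₁.2 * c) + t * (k.1 x₀ + k.2 * c) ≤ u := by
        intro t ht
        have hmem := hSK z₁ hz₁ _ (smul_mem_coneGen ht hk)
        have hval := hSlt _ hmem
        have e1 : (z₁ + t • k).1 x₀ = z₁.1 x₀ + t * k.1 x₀ := rfl
        have e2 : (z₁ + t • k).2 = z₁.2 + t * k.2 := rfl
        rw [e1, e2] at hval
        nlinarith [hval]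
      exact slope_nonpos hstep
    -- the unified final contradiction
    have hfin : ∀ (y : X) (γ : ℝ), (∀ z ∈ S, z.1 y - z.2 ≤ γ) → γ < p y + s → False := by
      intro y γ hP1 hP2
      have hKy : ∀ k ∈ charCone C f, k.1 y - k.2 ≤ 0 := by
        intro k hk
        have hstep : ∀ t : ℝ, 0 ≤ t → (z₁.1 y - z₁.2) + t * (k.1 y - k.2) ≤ γ := by
          intro t ht
          have hmem := hSK z₁ hz₁ _ (smul_mem_coneGen ht hk)
          have hval := hP1 _ hmem
          have e1 : (z₁ + t • k).1 y = z₁.1 y + t * k.1 y := rfl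
          have e2 : (z₁ + t • k).2 = z₁.2 + t * k.2 := rfl
          rw [e1, e2] at hval
          nlinarith [hval]
        exact slope_nonpos hstep
      have hEy : ∀ e ∈ epiFn (conjFn g), e.1 y - e.2 ≤ γ := fun e he => hP1 _ (hEsub e he)
      -- indicator function facts
      have hIb : ∀ x, indicatorE C x ≠ ⊥ := by
        intro x
        unfold indicatorE
        split <;> simp
      have hId : ∃ x, indicatorE C x ≠ ⊤ := by
        refine ⟨hCne.choose, ?_⟩
        rw [show indicatorE C hCne.choose = ((0:ℝ) : EReal) from if_pos hCne.choose_spec]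
        simp
      have hIepi : epiFn (indicatorE C) = C ×ˢ Set.Ici (0 : ℝ) := by
        ext z
        constructor
        · intro hz
          by_cases hzC : z.1 ∈ C
          · refine ⟨hzC, ?_⟩
            have : indicatorE C z.1 ≤ (z.2 : EReal) := hz
            rw [show indicatorE C z.1 = ((0:ℝ) : EReal) from if_pos hzC,
              EReal.coe_le_coe_iff] at this
            exact this
          · exfalso
            have : indicatorE C z.1 ≤ (z.2 : EReal) := hz
            rw [show indicatorE C z.1 = (⊤ : EReal) from if_neg hzC] at this
            exact EReal.coe_ne_top z.2 (top_le_iff.mp this)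
        · rintro ⟨hzC, hz2⟩
          show indicatorE C z.1 ≤ (z.2 : EReal)
          rw [show indicatorE C z.1 = ((0:ℝ) : EReal) from if_pos hzC,
            EReal.coe_le_coe_iff]
          exact hz2
      have hIconv : Convex ℝ (epiFn (indicatorE C)) := by
        rw [hIepi]
        exact hCcv.prod (convex_Ici 0)
      have hIcl : IsClosed (epiFn (indicatorE C)) := by
        rw [hIepi]
        exact hCcl.prod isClosed_Ici
      -- y ∈ C
      have hyC : y ∈ C := by
        by_contra hyC
        have hne : ¬ indicatorE C y ≤ (((0:ℝ)) : EReal) := by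
          rw [show indicatorE C y = (⊤ : EReal) from if_neg hyC]
          simp
        obtain ⟨zc, hzc, hzc2⟩ := fenchel_point hIb hId hIconv hIcl hne
        have : zc ∈ charCone C f := subset_coneGen (Set.mem_union_left _ hzc)
        exact absurd hzc2 (not_lt.mpr (hKy zc this))
      -- f i y ≤ 0
      have hyf : ∀ i, f i y ≤ (0 : EReal) := by
        intro i
        by_contra hfiy
        have hne : ¬ f i y ≤ (((0:ℝ)) : EReal) := by
          rwa [show (((0:ℝ)) : EReal) = (0 : EReal) from rfl]
        obtain ⟨zc, hzc, hzc2⟩ :=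
          fenchel_point (hf i).1 (hf i).2.1 (hf i).2.2.1 (isClosed_epiFn (hf i).2.2.2) hne
        have : zc ∈ charCone C f :=
          subset_coneGen (Set.mem_union_right _ (Set.mem_iUnion.mpr ⟨i, hzc⟩))
        exact absurd hzc2 (not_lt.mpr (hKy zc this))
      -- g y ≤ γ
      have hgy : g y ≤ ((γ : ℝ) : EReal) := by
        by_contra hne
        obtain ⟨zc, hzc, hzc2⟩ :=
          fenchel_point hgbot hgdom hgconv (isClosed_epiFn hglsc) hne
        exact absurd hzc2 (not_lt.mpr (hEy zc hzc))
      have hgynt : g y ≠ ⊤ := by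
        intro ht
        rw [ht] at hgy
        exact EReal.coe_ne_top γ (top_le_iff.mp hgy)
      obtain ⟨w, hw⟩ := ereal_real_cases (hgbot y) hgynt
      have hwγ : w ≤ γ := by
        rw [hw, EReal.coe_le_coe_iff] at hgy
        exact hgy
      have hyval := hyp y hyC hyf
      rw [hw, ← EReal.coe_sub, EReal.coe_le_coe_iff] at hyval
      linarith
    have hcle : c ≤ 0 := by
      have hstep : ∀ t : ℝ, 0 ≤ t → (z₁.1 x₀ + z₁.2 * c) + t * c ≤ u := by
        intro t ht
        have hmem := hSK z₁ hz₁ _ (h0t t ht)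
        have hval := hSlt _ hmem
        have e1 : (z₁ + ((0 : WeakDual ℝ X), t)).1 x₀ = z₁.1 x₀ + 0 := rfl
        have e2 : (z₁ + ((0 : WeakDual ℝ X), t)).2 = z₁.2 + t := rfl
        rw [e1, e2] at hval
        nlinarith [hval]
      exact slope_nonpos hstep
    rcases lt_or_eq_of_le hcle with hc | hc
    · -- c < 0
      have hainv : 0 < (-c)⁻¹ := inv_pos.mpr (by linarith)
      have hcne : -c ≠ 0 := ne_of_gt (by linarith)
      have hcne' : c ≠ 0 := ne_of_lt hc
      refine hfin ((-c)⁻¹ • x₀) ((-c)⁻¹ * u) ?_ ?_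
      · intro z hz
        have h1 := hSlt z hz
        have h2 := mul_lt_mul_of_pos_left h1 hainv
        rw [mul_add] at h2
        have h3 : (-c)⁻¹ * (z.2 * c) = -z.2 := by field_simp
        rw [h3] at h2
        have h4 : z.1 ((-c)⁻¹ • x₀) = (-c)⁻¹ * z.1 x₀ := by
          rw [map_smul]
          rfl
        rw [h4]
        linarith
      · have h2 := mul_lt_mul_of_pos_left hpoint hainv
        rw [mul_add] at h2
        have h3 : (-c)⁻¹ * (-s * c) = s := by field_simp
        rw [h3] at h2
        have h4 : p ((-c)⁻¹ • x₀) = (-c)⁻¹ * p x₀ := by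
          rw [map_smul]
          rfl
        rw [h4]
        linarith
    · -- c = 0
      have hc0 : c = 0 := hc
      obtain ⟨a, haA, hadom⟩ := hA
      obtain ⟨haC, haf⟩ := haA
      have hant : g a ≠ ⊤ := ne_of_lt hadom
      obtain ⟨va, hva⟩ := ereal_real_cases (hgbot a) hant
      have hpa : p a + s ≤ va := by
        have := hyp a haC haf
        rw [hva, ← EReal.coe_sub, EReal.coe_le_coe_iff] at this
        linarith
      have hpx₀ : u < p x₀ := by
        have := hpoint
        rw [hc0] at this
        simpa using this
      have hSx₀ : ∀ z ∈ S, z.1 x₀ < u := by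
        intro z hz
        have := hSlt z hz
        rw [hc0] at this
        simpa using this
      set lam : ℝ := max 0 ((va - (p a + s) + 1) / (p x₀ - u)) with hlamdef
      have hlam0 : 0 ≤ lam := le_max_left _ _
      have hlam1 : va - (p a + s) + 1 ≤ lam * (p x₀ - u) := by
        have hpos : 0 < p x₀ - u := by linarith
        have hne := ne_of_gt hpos
        have hle := le_max_right 0 ((va - (p a + s) + 1) / (p x₀ - u))
        calc va - (p a + s) + 1
            = ((va - (p a + s) + 1) / (p x₀ - u)) * (p x₀ - u) := by field_simp
          _ ≤ lam * (p x₀ - u) := mul_le_mul_of_nonneg_right hle hpos.le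
      refine hfin (a + lam • x₀) (va + lam * u) ?_ ?_
      · intro z hz
        have hza := sum_bound hfbot haC haf hva hz
        have hzx := hSx₀ z hz
        have h4 : z.1 (a + lam • x₀) = z.1 a + lam * z.1 x₀ := by
          rw [map_add, map_smul]
          rfl
        rw [h4]
        nlinarith [mul_le_mul_of_nonneg_left hzx.le hlam0]
      · have h4 : p (a + lam • x₀) = p a + lam * p x₀ := by
          rw [map_add, map_smul]
          rfl
        rw [h4]
        nlinarith
  · -- (b) → (a)
    intro hbmem x hxC hxf
    set w := g x with hw
    clear_value w
    induction w using EReal.rec with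
    | bot => exact absurd hw.symm (hgbot x)
    | coe v =>
      have hcont : Continuous fun z : WeakDual ℝ X × ℝ => z.1 x - z.2 :=
        ((WeakDual.eval_continuous x).comp continuous_fst).sub continuous_snd
      have hclosed : IsClosed {z : WeakDual ℝ X × ℝ | z.1 x - z.2 ≤ v} :=
        isClosed_le hcont continuous_const
      have hsub : S ⊆ {z : WeakDual ℝ X × ℝ | z.1 x - z.2 ≤ v} :=
        fun z hz => sum_bound hfbot hxC hxf hw.symm hz
      have hclS := closure_minimal hsub hclosed
      have hval := hclS hbmem
      simp only [Set.mem_setOf_eq] at hval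
      rw [← EReal.coe_sub, EReal.coe_le_coe_iff]
      linarith
    | top =>
      rw [EReal.top_sub_coe]
      exact le_top
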